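/- For ω_k, ω_j > 0, h > 0, and in the limit γ → 0⁺, the integral g(ω_k, ω_j) = ∫_{−∞}^{∞} dν / (((ω_k² − ν²)² + (2γνω_k²)²)·((ω_j − ν)² + h²)) satisfies 2γ·g(ω_k, ω_j)/π → (h² + ω_k² + ω_j²) / (ω_k⁴·(h⁴ + 2h²(ω_k² + ω_j²) + (ω_k² − ω_j²)²)). -/

import Mathlib

open MeasureTheory Real Filter Topology

private lemma kernel_integrable (a c : ℝ) (ha : 0 < a) :
    Integrable (fun ν : ℝ => a / π / ((ν - c) ^ 2 + a ^ 2)) := by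
  have h1 : Integrable (fun x : ℝ => (1 + (x / a) ^ 2)⁻¹) :=
    integrable_inv_one_add_sq.comp_div ha.ne'
  have h2 : Integrable (fun ν : ℝ => (1 + ((ν - c) / a) ^ 2)⁻¹) := h1.comp_sub_right c
  refine (h2.const_mul (1 / (a * π))).congr (Eventually.of_forall fun ν => ?_)
  have h3 : (ν - c) ^ 2 + a ^ 2 > 0 := by positivity
  field_simp
  ring

private lemma cauchy_mul_integrable (a c M : ℝ) (ha : 0 < a) (φ : ℝ → ℝ)
    (hφ : Continuous φ) (hM : ∀ x, |φ x| ≤ M) :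
    Integrable (fun ν : ℝ => a / π / ((ν - c) ^ 2 + a ^ 2) * φ ν) := by
  have := (kernel_integrable a c ha).bdd_mul hφ.aestronglyMeasurable
    (c := M) (ae_of_all _ fun x => by simpa using hM x)
  exact this.congr (Eventually.of_forall fun ν => by ring)

private lemma cauchy_subst (a c : ℝ) (ha : 0 < a) (φ : ℝ → ℝ) :
    (∫ ν : ℝ, a / π / ((ν - c) ^ 2 + a ^ 2) * φ ν)
      = ∫ t : ℝ, 1 / π / (1 + t ^ 2) * φ (a * t + c) := by
  set K : ℝ → ℝ := fun ν => a / π / ((ν - c) ^ 2 + a ^ 2) * φ ν with hK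
  have h1 : (∫ t : ℝ, K (a * t + c)) = |a⁻¹| • ∫ ν, K ν := by
    rw [show (fun t : ℝ => K (a * t + c)) = fun t : ℝ => (fun x => K (x + c)) (a * t) from rfl,
      MeasureTheory.Measure.integral_comp_mul_left (fun x => K (x + c)) a,
      integral_add_right_eq_self K c]
  have ha' : |a⁻¹| = a⁻¹ := abs_of_pos (by positivity)
  have h2 : (∫ ν, K ν) = a * ∫ t : ℝ, K (a * t + c) := by
    rw [h1, ha', smul_eq_mul]; field_simp
  rw [h2, ← MeasureTheory.integral_const_mul]
  congr 1; funext t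
  have h3 : (0:ℝ) < 1 + t ^ 2 := by positivity
  rw [hK]
  simp only []
  have h4 : a * t + c - c = a * t := by ring
  rw [h4, show (a * t) ^ 2 + a ^ 2 = a ^ 2 * (1 + t ^ 2) by ring]
  field_simp

private lemma pf_identity (ωk γ b q ν : ℝ) (hωk : 0 < ωk) (hγ : 0 < γ) (hb : 0 < b)
    (hb2 : b ^ 2 = ωk ^ 2 - (γ * ωk ^ 2) ^ 2) (hq : 0 < q) :
    2 * γ * (1 / (((ωk ^ 2 - ν ^ 2) ^ 2 + (2 * γ * ν * ωk ^ 2) ^ 2) * q)) / π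
      = 1 / ωk ^ 4 *
        (γ * ωk ^ 2 / π / ((ν - b) ^ 2 + (γ * ωk ^ 2) ^ 2) * ((1 - ν / (2 * b)) / q)
          + γ * ωk ^ 2 / π / ((ν - -b) ^ 2 + (γ * ωk ^ 2) ^ 2) * ((1 + ν / (2 * b)) / q)) := by
  have hπ : (0:ℝ) < π := Real.pi_pos
  have hX : (0:ℝ) < (ν - b) ^ 2 + (γ * ωk ^ 2) ^ 2 := by positivity
  have hY : (0:ℝ) < (ν - -b) ^ 2 + (γ * ωk ^ 2) ^ 2 := by positivity
  have hfact : (ωk ^ 2 - ν ^ 2) ^ 2 + (2 * γ * ν * ωk ^ 2) ^ 2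
      = ((ν - b) ^ 2 + (γ * ωk ^ 2) ^ 2) * ((ν - -b) ^ 2 + (γ * ωk ^ 2) ^ 2) := by
    linear_combination (2 * ν ^ 2 - b ^ 2 - ωk ^ 2 - (γ * ωk ^ 2) ^ 2) * hb2
  rw [hfact]
  have hkey : (2 * b - ν) * ((ν - -b) ^ 2 + (γ * ωk ^ 2) ^ 2)
      + (2 * b + ν) * ((ν - b) ^ 2 + (γ * ωk ^ 2) ^ 2) = 4 * b * ωk ^ 2 := by
    linear_combination 4 * b * hb2
  field_simp
  linear_combination (2 * γ * ωk ^ 2 * q * π) * hkey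
    - (4 * b + 8 * b * ωk ^ 2 * γ * q * π) * hb2

private lemma bound_aux (ωk ωj h : ℝ) (hωk : 0 < ωk) (hωj : 0 < ωj) (hh : 0 < h)
    (ν c : ℝ) (hc : |c| ≤ 1 + |ν| / ωk) :
    |c / ((ωj - ν) ^ 2 + h ^ 2)| ≤ 1 / h ^ 2 + 1 / ωk * (ωj / h ^ 2 + 1 / (2 * h)) := by
  set Q : ℝ := (ωj - ν) ^ 2 + h ^ 2 with hQ
  have hQpos : 0 < Q := by positivity
  have k1 : h ^ 2 ≤ Q := by nlinarith [sq_nonneg (ωj - ν)]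
  have k2 : 2 * h * |ν - ωj| ≤ Q := by
    nlinarith [sq_nonneg (|ν - ωj| - h), sq_abs (ν - ωj)]
  have k3 : |ν| ≤ |ν - ωj| + ωj := by
    calc |ν| = |(ν - ωj) + ωj| := by ring_nf
    _ ≤ |ν - ωj| + |ωj| := abs_add_le _ _
    _ = |ν - ωj| + ωj := by rw [abs_of_pos hωj]
  have m1 : (1:ℝ) ≤ Q / h ^ 2 := (one_le_div (by positivity)).2 k1
  have m2 : |ν - ωj| ≤ Q / (2 * h) := (le_div_iff₀ (by positivity)).2 (by linarith)
  have m3 : ωj ≤ ωj * (Q / h ^ 2) := le_mul_of_one_le_right hωj.le m1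
  have m4 : |ν| / ωk ≤ (Q / (2 * h) + ωj * (Q / h ^ 2)) / ωk := by
    have := (div_le_div_iff_of_pos_right hωk).2 (show |ν| ≤ Q / (2 * h) + ωj * (Q / h ^ 2) by linarith)
    exact this
  have key : 1 + |ν| / ωk ≤ (1 / h ^ 2 + 1 / ωk * (ωj / h ^ 2 + 1 / (2 * h))) * Q := by
    have : (1 / h ^ 2 + 1 / ωk * (ωj / h ^ 2 + 1 / (2 * h))) * Q
        = Q / h ^ 2 + (Q / (2 * h) + ωj * (Q / h ^ 2)) / ωk := by ring
    rw [this]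
    linarith
  rw [abs_div, abs_of_pos hQpos, div_le_iff₀ hQpos]
  calc |c| ≤ 1 + |ν| / ωk := hc
  _ ≤ _ := key

/-- For `ω_k, ω_j > 0`, `h > 0`, in the limit `γ → 0⁺`, the integral
`g(ω_k, ω_j) = ∫ dν / (((ω_k² − ν²)² + (2γνω_k²)²)((ω_j − ν)² + h²))` satisfies
`2γ g(ω_k,ω_j)/π → (h² + ω_k² + ω_j²)/(ω_k⁴ (h⁴ + 2h²(ω_k² + ω_j²) + (ω_k² − ω_j²)²))`. -/
theorem resonance_integral_limit
    (ωk ωj h : ℝ) (hωk : 0 < ωk) (hωj : 0 < ωj) (hh : 0 < h) :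
    Tendsto
      (fun γ : ℝ =>
        2 * γ *
          (∫ ν : ℝ, 1 /
            (((ωk ^ 2 - ν ^ 2) ^ 2 + (2 * γ * ν * ωk ^ 2) ^ 2) *
              ((ωj - ν) ^ 2 + h ^ 2))) / π)
      (nhdsWithin 0 (Set.Ioi 0))
      (nhds ((h ^ 2 + ωk ^ 2 + ωj ^ 2) /
        (ωk ^ 4 * (h ^ 4 + 2 * h ^ 2 * (ωk ^ 2 + ωj ^ 2) + (ωk ^ 2 - ωj ^ 2) ^ 2)))) := by
  have hπ : (0:ℝ) < π := Real.pi_pos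
  set l : Filter ℝ := nhdsWithin 0 (Set.Ioi 0) with hl
  haveI : Filter.IsCountablyGenerated l := by rw [hl]; infer_instance
  set Q : ℝ → ℝ := fun ν => (ωj - ν) ^ 2 + h ^ 2 with hQdef
  have hQpos : ∀ ν, 0 < Q ν := fun ν => by simp only [hQdef]; positivity
  have hQcont : Continuous Q := by
    simp only [hQdef]; exact ((continuous_const.sub continuous_id).pow 2).add continuous_const
  set M : ℝ := 1 / h ^ 2 + 1 / ωk * (ωj / h ^ 2 + 1 / (2 * h)) with hMdef
  -- the scale and center families
  set A : ℝ → ℝ := fun γ => γ * ωk ^ 2 with hA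
  set B : ℝ → ℝ := fun γ => Real.sqrt (ωk ^ 2 - (γ * ωk ^ 2) ^ 2) with hB
  have hev : ∀ᶠ γ in l, γ ∈ Set.Ioo (0:ℝ) (1 / (2 * ωk)) :=
    Ioo_mem_nhdsGT_of_mem ⟨le_refl 0, by positivity⟩
  have hmem : ∀ γ ∈ Set.Ioo (0:ℝ) (1 / (2 * ωk)),
      0 < A γ ∧ (B γ) ^ 2 = ωk ^ 2 - (γ * ωk ^ 2) ^ 2 ∧ ωk ≤ 2 * B γ ∧ 0 < B γ := by
    intro γ hγ
    obtain ⟨hγ0, hγ1⟩ := hγ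
    have h2γ : 2 * γ * ωk < 1 := by
      rw [lt_div_iff₀ (by positivity)] at hγ1; linarith
    have h4 : (2 * γ * ωk) ^ 2 < 1 := by nlinarith [mul_pos hγ0 hωk]
    have h5 : γ ^ 2 * ωk ^ 2 < 1 / 4 := by nlinarith
    have h6 := mul_lt_mul_of_pos_right h5 (show (0:ℝ) < ωk ^ 2 by positivity)
    have hsq : (ωk / 2) ^ 2 ≤ ωk ^ 2 - (γ * ωk ^ 2) ^ 2 := by nlinarith
    have hA0 : 0 < A γ := by simp only [hA]; positivity
    have hb2 : (B γ) ^ 2 = ωk ^ 2 - (γ * ωk ^ 2) ^ 2 := by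
      simp only [hB]; rw [sq_sqrt]; nlinarith
    have hble : ωk / 2 ≤ B γ := by
      simp only [hB]
      rw [show ωk / 2 = Real.sqrt ((ωk / 2) ^ 2) by rw [Real.sqrt_sq (by positivity)]]
      exact Real.sqrt_le_sqrt hsq
    exact ⟨hA0, hb2, by linarith, by linarith⟩
  -- limits of the families
  have hA0 : Tendsto A l (𝓝 0) := by
    have : Continuous A := by simp only [hA]; exact continuous_id.mul continuous_const
    have := this.tendsto 0
    simp only [hA, zero_mul] at this
    exact this.mono_left nhdsWithin_le_nhds
  have hB0 : Tendsto B l (𝓝 ωk) := by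
    have hc : Continuous B := by
      simp only [hB]
      exact Real.continuous_sqrt.comp (continuous_const.sub ((continuous_id.mul continuous_const).pow 2))
    have := hc.tendsto 0
    simp only [hB, zero_mul, ne_eq, OfNat.ofNat_ne_zero, not_false_eq_true, zero_pow, sub_zero] at this
    rw [Real.sqrt_sq hωk.le] at this
    exact this.mono_left nhdsWithin_le_nhds
  -- the two integrals after substitution
  have calcint : ∀ C : ℝ, (∫ t : ℝ, 1 / π / (1 + t ^ 2) * C) = C := by
    intro C
    rw [show (fun t : ℝ => 1 / π / (1 + t ^ 2) * C) = fun t : ℝ => C / π * (1 + t ^ 2)⁻¹ from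
      funext fun t => by ring]
    rw [MeasureTheory.integral_const_mul, integral_univ_inv_one_add_sq]
    field_simp
  -- dominated convergence for piece 1
  have T1 : Tendsto (fun γ => ∫ t : ℝ, 1 / π / (1 + t ^ 2) *
      ((1 - (A γ * t + B γ) / (2 * B γ)) / Q (A γ * t + B γ))) l (𝓝 (1 / 2 / Q ωk)) := by
    rw [← calcint (1 / 2 / Q ωk)]
    apply tendsto_integral_filter_of_dominated_convergence (fun t : ℝ => M / π * (1 + t ^ 2)⁻¹)
    · filter_upwards [hev] with γ hγ
      obtain ⟨ha, hb2, h2b, hbpos⟩ := hmem γ hγ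
      apply Continuous.aestronglyMeasurable
      have h1 : Continuous fun t : ℝ => A γ * t + B γ :=
        (continuous_const.mul continuous_id).add continuous_const
      exact (continuous_const.div (continuous_const.add (continuous_pow 2))
          (fun t => (by positivity : (0:ℝ) < 1 + t ^ 2).ne')).mul
        ((continuous_const.sub (h1.div_const _)).div (hQcont.comp h1)
          (fun t => (hQpos _).ne'))
    · filter_upwards [hev] with γ hγ
      obtain ⟨ha, hb2, h2b, hbpos⟩ := hmem γ hγ
      apply ae_of_all
      intro t
      set ν : ℝ := A γ * t + B γ
      have habs : |1 - ν / (2 * B γ)| ≤ 1 + |ν| / ωk := by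
        calc |1 - ν / (2 * B γ)| ≤ |(1:ℝ)| + |ν / (2 * B γ)| := abs_sub _ _
        _ = 1 + |ν| / (2 * B γ) := by
            rw [abs_one, abs_div, abs_of_pos (by linarith : (0:ℝ) < 2 * B γ)]
        _ ≤ 1 + |ν| / ωk := by
            have := div_le_div_of_nonneg_left (abs_nonneg ν) hωk h2b
            linarith
      have hb := bound_aux ωk ωj h hωk hωj hh ν _ habs
      rw [Real.norm_eq_abs, abs_mul]
      have h1 : |1 / π / (1 + t ^ 2)| = 1 / π / (1 + t ^ 2) := abs_of_pos (by positivity)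
      rw [h1]
      calc 1 / π / (1 + t ^ 2) * |(1 - ν / (2 * B γ)) / Q ν|
          ≤ 1 / π / (1 + t ^ 2) * M := by
            apply mul_le_mul_of_nonneg_left _ (by positivity)
            simpa [hQdef, hMdef] using hb
        _ = M / π * (1 + t ^ 2)⁻¹ := by ring
    · exact integrable_inv_one_add_sq.const_mul _
    · apply ae_of_all
      intro t
      have hν : Tendsto (fun γ => A γ * t + B γ) l (𝓝 ωk) := by
        have := (hA0.mul_const t).add hB0
        simpa using this
      have hq : Tendsto (fun γ => Q (A γ * t + B γ)) l (𝓝 (Q ωk)) :=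
        (hQcont.tendsto ωk).comp hν
      have hden : Tendsto (fun γ => 2 * B γ) l (𝓝 (2 * ωk)) := hB0.const_mul 2
      have hfrac : Tendsto (fun γ => 1 - (A γ * t + B γ) / (2 * B γ)) l
          (𝓝 (1 - ωk / (2 * ωk))) :=
        tendsto_const_nhds.sub (hν.div hden (by positivity))
      have hhalf : 1 - ωk / (2 * ωk) = 1 / 2 := by
        rw [mul_comm, ← div_div, div_self hωk.ne']; norm_num
      rw [hhalf] at hfrac
      exact ((hfrac.div hq (hQpos ωk).ne').const_mul _)
  -- dominated convergence for piece 2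
  have T2 : Tendsto (fun γ => ∫ t : ℝ, 1 / π / (1 + t ^ 2) *
      ((1 + (A γ * t + -B γ) / (2 * B γ)) / Q (A γ * t + -B γ))) l (𝓝 (1 / 2 / Q (-ωk))) := by
    rw [← calcint (1 / 2 / Q (-ωk))]
    apply tendsto_integral_filter_of_dominated_convergence (fun t : ℝ => M / π * (1 + t ^ 2)⁻¹)
    · filter_upwards [hev] with γ hγ
      obtain ⟨ha, hb2, h2b, hbpos⟩ := hmem γ hγ
      apply Continuous.aestronglyMeasurable
      have h1 : Continuous fun t : ℝ => A γ * t + -B γ :=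
        (continuous_const.mul continuous_id).add continuous_const
      exact (continuous_const.div (continuous_const.add (continuous_pow 2))
          (fun t => (by positivity : (0:ℝ) < 1 + t ^ 2).ne')).mul
        ((continuous_const.add (h1.div_const _)).div (hQcont.comp h1)
          (fun t => (hQpos _).ne'))
    · filter_upwards [hev] with γ hγ
      obtain ⟨ha, hb2, h2b, hbpos⟩ := hmem γ hγ
      apply ae_of_all
      intro t
      set ν : ℝ := A γ * t + -B γ
      have habs : |1 + ν / (2 * B γ)| ≤ 1 + |ν| / ωk := by
        calc |1 + ν / (2 * B γ)| ≤ |(1:ℝ)| + |ν / (2 * B γ)| := abs_add_le _ _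
        _ = 1 + |ν| / (2 * B γ) := by
            rw [abs_one, abs_div, abs_of_pos (by linarith : (0:ℝ) < 2 * B γ)]
        _ ≤ 1 + |ν| / ωk := by
            have := div_le_div_of_nonneg_left (abs_nonneg ν) hωk h2b
            linarith
      have hb := bound_aux ωk ωj h hωk hωj hh ν _ habs
      rw [Real.norm_eq_abs, abs_mul]
      have h1 : |1 / π / (1 + t ^ 2)| = 1 / π / (1 + t ^ 2) := abs_of_pos (by positivity)
      rw [h1]
      calc 1 / π / (1 + t ^ 2) * |(1 + ν / (2 * B γ)) / Q ν|
          ≤ 1 / π / (1 + t ^ 2) * M := by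
            apply mul_le_mul_of_nonneg_left _ (by positivity)
            simpa [hQdef, hMdef] using hb
        _ = M / π * (1 + t ^ 2)⁻¹ := by ring
    · exact integrable_inv_one_add_sq.const_mul _
    · apply ae_of_all
      intro t
      have hν : Tendsto (fun γ => A γ * t + -B γ) l (𝓝 (-ωk)) := by
        have := (hA0.mul_const t).add hB0.neg
        simpa using this
      have hq : Tendsto (fun γ => Q (A γ * t + -B γ)) l (𝓝 (Q (-ωk))) :=
        (hQcont.tendsto (-ωk)).comp hν
      have hden : Tendsto (fun γ => 2 * B γ) l (𝓝 (2 * ωk)) := hB0.const_mul 2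
      have hfrac : Tendsto (fun γ => 1 + (A γ * t + -B γ) / (2 * B γ)) l
          (𝓝 (1 + -ωk / (2 * ωk))) :=
        tendsto_const_nhds.add (hν.div hden (by positivity))
      have hhalf : 1 + -ωk / (2 * ωk) = 1 / 2 := by
        rw [neg_div, mul_comm, ← div_div, div_self hωk.ne']; norm_num
      rw [hhalf] at hfrac
      exact ((hfrac.div hq (hQpos (-ωk)).ne').const_mul _)
  -- combine
  have Tsum := (T1.add T2).const_mul (1 / ωk ^ 4)
  have hval : 1 / ωk ^ 4 * (1 / 2 / Q ωk + 1 / 2 / Q (-ωk))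
      = (h ^ 2 + ωk ^ 2 + ωj ^ 2) /
        (ωk ^ 4 * (h ^ 4 + 2 * h ^ 2 * (ωk ^ 2 + ωj ^ 2) + (ωk ^ 2 - ωj ^ 2) ^ 2)) := by
    have q1 : 0 < Q ωk := hQpos ωk
    have q2 : 0 < Q (-ωk) := hQpos (-ωk)
    simp only [hQdef] at *
    have hD : (0:ℝ) < h ^ 4 + 2 * h ^ 2 * (ωk ^ 2 + ωj ^ 2) + (ωk ^ 2 - ωj ^ 2) ^ 2 := by
      nlinarith [sq_nonneg (ωk ^ 2 - ωj ^ 2), sq_nonneg h, sq_nonneg ωk, sq_nonneg ωj]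
    field_simp
    ring
  rw [hval] at Tsum
  -- eventual equality with the original expression
  apply Tsum.congr'
  filter_upwards [hev] with γ hγ
  obtain ⟨ha, hb2, h2b, hbpos⟩ := hmem γ hγ
  have hφ₁c : Continuous fun ν : ℝ => (1 - ν / (2 * B γ)) / Q ν :=
    (continuous_const.sub (continuous_id.div_const _)).div hQcont fun ν => (hQpos ν).ne'
  have hφ₂c : Continuous fun ν : ℝ => (1 + ν / (2 * B γ)) / Q ν :=
    (continuous_const.add (continuous_id.div_const _)).div hQcont fun ν => (hQpos ν).ne'
  have habs1 : ∀ ν : ℝ, |(1 - ν / (2 * B γ)) / Q ν| ≤ M := by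
    intro ν
    have habs : |1 - ν / (2 * B γ)| ≤ 1 + |ν| / ωk := by
      calc |1 - ν / (2 * B γ)| ≤ |(1:ℝ)| + |ν / (2 * B γ)| := abs_sub _ _
      _ = 1 + |ν| / (2 * B γ) := by
          rw [abs_one, abs_div, abs_of_pos (by linarith : (0:ℝ) < 2 * B γ)]
      _ ≤ 1 + |ν| / ωk := by
          have := div_le_div_of_nonneg_left (abs_nonneg ν) hωk h2b
          linarith
    simpa [hQdef, hMdef] using bound_aux ωk ωj h hωk hωj hh ν _ habs
  have habs2 : ∀ ν : ℝ, |(1 + ν / (2 * B γ)) / Q ν| ≤ M := by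
    intro ν
    have habs : |1 + ν / (2 * B γ)| ≤ 1 + |ν| / ωk := by
      calc |1 + ν / (2 * B γ)| ≤ |(1:ℝ)| + |ν / (2 * B γ)| := abs_add_le _ _
      _ = 1 + |ν| / (2 * B γ) := by
          rw [abs_one, abs_div, abs_of_pos (by linarith : (0:ℝ) < 2 * B γ)]
      _ ≤ 1 + |ν| / ωk := by
          have := div_le_div_of_nonneg_left (abs_nonneg ν) hωk h2b
          linarith
    simpa [hQdef, hMdef] using bound_aux ωk ωj h hωk hωj hh ν _ habs
  have hint₁ : Integrable (fun ν : ℝ =>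
      A γ / π / ((ν - B γ) ^ 2 + (A γ) ^ 2) * ((1 - ν / (2 * B γ)) / Q ν)) :=
    cauchy_mul_integrable (A γ) (B γ) M ha _ hφ₁c habs1
  have hint₂ : Integrable (fun ν : ℝ =>
      A γ / π / ((ν - -B γ) ^ 2 + (A γ) ^ 2) * ((1 + ν / (2 * B γ)) / Q ν)) :=
    cauchy_mul_integrable (A γ) (-B γ) M ha _ hφ₂c habs2
  have hid : ∀ ν : ℝ,
      2 * γ * (1 / (((ωk ^ 2 - ν ^ 2) ^ 2 + (2 * γ * ν * ωk ^ 2) ^ 2) * Q ν)) / π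
        = 1 / ωk ^ 4 *
          (A γ / π / ((ν - B γ) ^ 2 + (A γ) ^ 2) * ((1 - ν / (2 * B γ)) / Q ν)
            + A γ / π / ((ν - -B γ) ^ 2 + (A γ) ^ 2) * ((1 + ν / (2 * B γ)) / Q ν)) := by
    intro ν
    exact pf_identity ωk γ (B γ) (Q ν) ν hωk hγ.1 hbpos hb2 (hQpos ν)
  calc 1 / ωk ^ 4 *
        ((∫ t : ℝ, 1 / π / (1 + t ^ 2) *
          ((1 - (A γ * t + B γ) / (2 * B γ)) / Q (A γ * t + B γ)))
        + ∫ t : ℝ, 1 / π / (1 + t ^ 2) *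
          ((1 + (A γ * t + -B γ) / (2 * B γ)) / Q (A γ * t + -B γ)))
      = 1 / ωk ^ 4 *
        ((∫ ν : ℝ, A γ / π / ((ν - B γ) ^ 2 + (A γ) ^ 2) * ((1 - ν / (2 * B γ)) / Q ν))
        + ∫ ν : ℝ, A γ / π / ((ν - -B γ) ^ 2 + (A γ) ^ 2) * ((1 + ν / (2 * B γ)) / Q ν)) := by
        rw [cauchy_subst (A γ) (B γ) ha (fun ν => (1 - ν / (2 * B γ)) / Q ν),
          cauchy_subst (A γ) (-B γ) ha (fun ν => (1 + ν / (2 * B γ)) / Q ν)]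
    _ = ∫ ν : ℝ, 1 / ωk ^ 4 *
        (A γ / π / ((ν - B γ) ^ 2 + (A γ) ^ 2) * ((1 - ν / (2 * B γ)) / Q ν)
          + A γ / π / ((ν - -B γ) ^ 2 + (A γ) ^ 2) * ((1 + ν / (2 * B γ)) / Q ν)) := by
        rw [MeasureTheory.integral_const_mul, integral_add hint₁ hint₂]
    _ = ∫ ν : ℝ, 2 * γ * (1 / (((ωk ^ 2 - ν ^ 2) ^ 2 + (2 * γ * ν * ωk ^ 2) ^ 2) * Q ν)) / π := by
        exact integral_congr_ae (Eventually.of_forall fun ν => (hid ν).symm)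
    _ = 2 * γ * (∫ ν : ℝ, 1 / (((ωk ^ 2 - ν ^ 2) ^ 2 + (2 * γ * ν * ωk ^ 2) ^ 2) * Q ν)) / π := by
        rw [← MeasureTheory.integral_const_mul, ← integral_div]
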